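/- A group G is right orderable if and only if every nontrivial finitely generated subgroup of G admits a surjective homomorphism onto some nontrivial right orderable group. -/

import Mathlib

/-- A group is right orderable if it admits a linear order invariant under right
multiplication. -/
def RightOrderable (G : Type*) [Group G] : Prop :=
  ∃ lo : LinearOrder G, ∀ a b c : G, lo.le a b → lo.le (a * c) (b * c)

namespace BurnsHaleAux

variable {G : Type*} [Group G]

/-- Signed version of an element, according to a sign function. -/
def sg (ε : G → Bool) (g : G) : G := cond (ε g) g g⁻¹

lemma sg_eq_of_agree {ε ε' : G → Bool} {g : G} (h : ε g = ε' g) : sg ε g = sg ε' g := by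
  simp [sg, h]

/-- Membership in a semigroup closure gives a nonempty list representation. -/
lemma exists_list_of_mem_sclosure {S : Set G} {x : G} (hx : x ∈ Subsemigroup.closure S) :
    ∃ l : List G, l ≠ [] ∧ (∀ y ∈ l, y ∈ S) ∧ l.prod = x := by
  induction hx using Subsemigroup.closure_induction with
  | mem x h => exact ⟨[x], by simp, by simp [h], by simp⟩
  | mul x y hx hy ihx ihy =>
    obtain ⟨l1, h1, h1S, h1p⟩ := ihx
    obtain ⟨l2, h2, h2S, h2p⟩ := ihy
    refine ⟨l1 ++ l2, by simp [h1], ?_, by simp [h1p, h2p]⟩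
    intro y hy
    rcases List.mem_append.1 hy with h | h
    · exact h1S y h
    · exact h2S y h

lemma list_prod_mem_sclosure {S : Set G} {l : List G} (hne : l ≠ [])
    (hS : ∀ y ∈ l, y ∈ S) : l.prod ∈ Subsemigroup.closure S := by
  induction l with
  | nil => exact absurd rfl hne
  | cons a t ih =>
    rcases eq_or_ne t [] with rfl | ht
    · simpa using Subsemigroup.subset_closure (hS a (by simp))
    · rw [List.prod_cons]
      exact mul_mem (Subsemigroup.subset_closure (hS a (by simp)))
        (ih ht fun y hy => hS y (List.mem_cons_of_mem _ hy))

/-- Membership in closure of an image only uses finitely many preimage points. -/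
lemma mem_sclosure_image_finset {f : G → G} {S : Set G} {x : G}
    (hx : x ∈ Subsemigroup.closure (f '' S)) :
    ∃ T : Finset G, ↑T ⊆ S ∧ x ∈ Subsemigroup.closure (f '' ↑T) := by
  classical
  induction hx using Subsemigroup.closure_induction with
  | mem x h =>
    obtain ⟨g, hg, rfl⟩ := h
    exact ⟨{g}, by simpa using hg, Subsemigroup.subset_closure ⟨g, by simp⟩⟩
  | mul x y hx hy ihx ihy =>
    obtain ⟨T1, hT1, hx1⟩ := ihx
    obtain ⟨T2, hT2, hy2⟩ := ihy
    refine ⟨T1 ∪ T2, by rw [Finset.coe_union]; exact Set.union_subset hT1 hT2, ?_⟩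
    have h1 : Subsemigroup.closure (f '' ↑T1) ≤ Subsemigroup.closure (f '' ↑(T1 ∪ T2)) :=
      Subsemigroup.closure_mono (Set.image_mono (by rw [Finset.coe_union]; exact Set.subset_union_left))
    have h2 : Subsemigroup.closure (f '' ↑T2) ≤ Subsemigroup.closure (f '' ↑(T1 ∪ T2)) :=
      Subsemigroup.closure_mono (Set.image_mono (by rw [Finset.coe_union]; exact Set.subset_union_right))
    exact mul_mem (h1 hx1) (h2 hy2)

section OrderLemmas

variable {K : Type*} [Group K] (lo : LinearOrder K)
  (inv : ∀ a b c : K, lo.le a b → lo.le (a * c) (b * c))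

include inv

lemma one_le_mul' (a b : K) (ha : lo.le 1 a) (hb : lo.le 1 b) : lo.le 1 (a * b) := by
  have h := inv 1 a b ha
  rw [one_mul] at h
  exact lo.le_trans _ _ _ hb h

lemma mul_ne_one' (a b : K) (ha : lo.le 1 a) (hb : lo.le 1 b)
    (h : a ≠ 1 ∨ b ≠ 1) : a * b ≠ 1 := by
  intro hab
  have hb' : b = a⁻¹ := eq_inv_of_mul_eq_one_right hab
  have hinv : lo.le a⁻¹ 1 := by
    have := inv 1 a a⁻¹ ha
    rwa [one_mul, mul_inv_cancel] at this
  have hb1 : b = 1 := lo.le_antisymm _ _ (hb' ▸ hinv) hb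
  have ha1 : a = 1 := by
    rw [hb1] at hab; rwa [mul_one] at hab
  rcases h with h | h
  · exact h ha1
  · exact h hb1

lemma one_le_list_prod (l : List K) (h1 : ∀ y ∈ l, lo.le 1 y) : lo.le 1 l.prod := by
  induction l with
  | nil => simpa using lo.le_refl 1
  | cons a t ih =>
    rw [List.prod_cons]
    exact one_le_mul' lo inv _ _ (h1 a (by simp)) (ih fun y hy => h1 y (by simp [hy]))

lemma one_lt_list_prod (l : List K) (h1 : ∀ y ∈ l, lo.le 1 y)
    (h2 : ∃ y ∈ l, y ≠ 1) : l.prod ≠ 1 := by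
  induction l with
  | nil => simp at h2
  | cons a t ih =>
    rw [List.prod_cons]
    have ha : lo.le 1 a := h1 a (by simp)
    have ht : lo.le 1 t.prod := one_le_list_prod lo inv t fun y hy => h1 y (by simp [hy])
    obtain ⟨y, hy, hy1⟩ := h2
    rcases List.mem_cons.1 hy with rfl | hyt
    · exact mul_ne_one' lo inv _ _ ha ht (Or.inl hy1)
    · exact mul_ne_one' lo inv _ _ ha ht
        (Or.inr (ih (fun z hz => h1 z (by simp [hz])) ⟨y, hyt, hy1⟩))

end OrderLemmas


/-- Compactness: if every finite subset avoiding `1` admits a good sign assignment,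
then `G` is right orderable. -/
lemma rightOrderable_of_good
    (h : ∀ F : Finset G, (1:G) ∉ F → ∃ ε : G → Bool,
      (1:G) ∉ Subsemigroup.closure (sg ε '' ↑F)) :
    RightOrderable G := by
  classical
  let w : Finset G → (G → Bool) := fun F =>
    Classical.choose (h (F.erase 1) (Finset.notMem_erase 1 F))
  have hw : ∀ F : Finset G, (1:G) ∉ Subsemigroup.closure (sg (w F) '' ↑(F.erase 1)) :=
    fun F => Classical.choose_spec (h (F.erase 1) (Finset.notMem_erase 1 F))
  let U : Ultrafilter (Finset G) := Ultrafilter.of Filter.atTop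
  have hU : ↑U ≤ (Filter.atTop : Filter (Finset G)) := Ultrafilter.of_le _
  let ε : G → Bool := fun g => if {F | w F g = true} ∈ U then true else false
  have agree : ∀ g : G, {F | w F g = ε g} ∈ U := by
    intro g
    by_cases hg : {F | w F g = true} ∈ U
    · have : ε g = true := if_pos hg
      rw [this]; exact hg
    · have hfalse : ε g = false := if_neg hg
      rw [hfalse]
      have hc : {F | w F g = true}ᶜ ∈ U := Ultrafilter.compl_mem_iff_notMem.2 hg
      convert hc using 1
      ext F
      simp [Set.mem_compl_iff]
  have good : ∀ F : Finset G, (1:G) ∉ F →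
      (1:G) ∉ Subsemigroup.closure (sg ε '' ↑F) := by
    intro F hF
    have hmem : {F' : Finset G | F ≤ F'} ∈ U := hU (Filter.mem_atTop F)
    have h2 : {F' | ∀ g ∈ F, w F' g = ε g} ∈ U := by
      have hbi : (⋂ g ∈ (↑F : Set G), {F' | w F' g = ε g}) ∈ (↑U : Filter (Finset G)) :=
        (Filter.biInter_mem F.finite_toSet).2 (fun g _ => agree g)
      rw [Ultrafilter.mem_coe] at hbi
      convert hbi using 1
      ext F'
      simp
    have hall : {F' : Finset G | F ≤ F'} ∩ {F' | ∀ g ∈ F, w F' g = ε g} ∈ U :=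
      Filter.inter_mem hmem h2
    obtain ⟨F', hF'⟩ := Filter.nonempty_of_mem (Ultrafilter.mem_coe.2 hall)
    obtain ⟨hF'sub, hF'ag⟩ := hF'
    intro hmem1
    apply hw F'
    have himg : sg ε '' (↑F : Set G) = sg (w F') '' ↑F :=
      Set.image_congr fun g hg => sg_eq_of_agree (hF'ag g hg).symm
    have hsub : (↑F : Set G) ⊆ ↑(F'.erase 1) := by
      intro g hg
      simp only [Finset.coe_erase, Set.mem_diff, Set.mem_singleton_iff]
      exact ⟨hF'sub hg, fun h1 => hF (by rwa [h1] at hg)⟩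
    exact Subsemigroup.closure_mono (himg ▸ Set.image_mono hsub) hmem1
  -- The positive cone
  set P := Subsemigroup.closure (sg ε '' {g : G | g ≠ 1}) with hPdef
  have honeP : (1:G) ∉ P := by
    intro h1
    obtain ⟨T, hTsub, hT⟩ := mem_sclosure_image_finset h1
    exact good T (fun h1T => hTsub h1T rfl) hT
  have htotal : ∀ g : G, g ≠ 1 → g ∈ P ∨ g⁻¹ ∈ P := by
    intro g hg
    have hmem : sg ε g ∈ P := Subsemigroup.subset_closure ⟨g, hg, rfl⟩
    cases hεg : ε g with
    | true => left; simpa only [sg, hεg, Bool.cond_true] using hmem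
    | false => right; simpa only [sg, hεg, Bool.cond_false] using hmem
  refine ⟨{ le := fun a b => a = b ∨ b * a⁻¹ ∈ P,
            lt := fun a b => (a = b ∨ b * a⁻¹ ∈ P) ∧ ¬ (b = a ∨ a * b⁻¹ ∈ P),
            le_refl := fun a => Or.inl rfl,
            le_trans := ?_,
            lt_iff_le_not_ge := fun _ _ => Iff.rfl,
            le_antisymm := ?_,
            le_total := ?_,
            toDecidableLE := fun _ _ => Classical.dec _,
            toDecidableEq := fun _ _ => Classical.dec _,
            toDecidableLT := fun _ _ => Classical.dec _ }, ?_⟩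
  · rintro a b c (rfl | hab) hbc
    · exact hbc
    · rcases hbc with rfl | hbc
      · exact Or.inr hab
      · refine Or.inr ?_
        have := mul_mem hbc hab
        rwa [show c * b⁻¹ * (b * a⁻¹) = c * a⁻¹ by group] at this
  · rintro a b (rfl | hab) hba
    · rfl
    · rcases hba with rfl | hba
      · rfl
      · exfalso
        apply honeP
        have := mul_mem hab hba
        rwa [show b * a⁻¹ * (a * b⁻¹) = 1 by group] at this
  · intro a b
    rcases eq_or_ne a b with rfl | hne
    · exact Or.inl (Or.inl rfl)
    · have hba : b * a⁻¹ ≠ 1 := by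
        intro h
        have hba2 : b = a := by rw [← one_mul a, ← h, mul_assoc, inv_mul_cancel, mul_one]
        exact hne hba2.symm
      rcases htotal _ hba with h | h
      · exact Or.inl (Or.inr h)
      · refine Or.inr (Or.inr ?_)
        rwa [show (b * a⁻¹)⁻¹ = a * b⁻¹ by group] at h
  · rintro a b c (rfl | hab)
    · exact Or.inl rfl
    · refine Or.inr ?_
      rwa [show b * c * (a * c)⁻¹ = b * a⁻¹ by group]

/-- The key induction: under the Burns–Hale hypothesis, every finite subset avoiding `1`
admits a good sign assignment. -/
lemma good_of_hyp {G : Type u} [Group G]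
    (hyp : ∀ H : Subgroup G, H.FG → H ≠ ⊥ →
        ∃ (K : Type u) (_ : Group K), Nontrivial K ∧ RightOrderable K ∧
          ∃ f : H →* K, Function.Surjective f) :
    ∀ (n : ℕ) (F : Finset G), F.card ≤ n → (1:G) ∉ F →
      ∃ ε : G → Bool, (1:G) ∉ Subsemigroup.closure (sg ε '' ↑F) := by
  classical
  intro n
  induction n with
  | zero =>
    intro F hcard _
    have : F = ∅ := Finset.card_eq_zero.1 (Nat.le_zero.1 hcard)
    subst this
    exact ⟨fun _ => true, by simp only [Finset.coe_empty, Set.image_empty, Subsemigroup.closure_empty]; exact Subsemigroup.notMem_bot⟩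
  | succ n ih =>
    intro F hcard hF1
    rcases Finset.eq_empty_or_nonempty F with rfl | ⟨g0, hg0⟩
    · exact ⟨fun _ => true, by simp only [Finset.coe_empty, Set.image_empty, Subsemigroup.closure_empty]; exact Subsemigroup.notMem_bot⟩
    have hFG : (Subgroup.closure (↑F : Set G)).FG := ⟨F, rfl⟩
    have hHne : Subgroup.closure (↑F : Set G) ≠ ⊥ := by
      intro hbot
      have hg0H : g0 ∈ Subgroup.closure (↑F : Set G) := Subgroup.subset_closure hg0
      rw [hbot, Subgroup.mem_bot] at hg0H
      exact hF1 (hg0H ▸ hg0)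
    obtain ⟨K, instK, ntK, ⟨loK, invK⟩, f, hf⟩ := hyp _ hFG hHne
    let f' : G → K := fun g => if h : g ∈ Subgroup.closure (↑F : Set G) then f ⟨g, h⟩ else 1
    have hf'eq : ∀ (g : G) (h : g ∈ Subgroup.closure (↑F : Set G)), f' g = f ⟨g, h⟩ :=
      fun g h => dif_pos h
    have hf'one : f' 1 = 1 := by
      rw [hf'eq 1 (one_mem _)]
      exact map_one f
    have hf'mul : ∀ {x y : G}, x ∈ Subgroup.closure (↑F : Set G) →
        y ∈ Subgroup.closure (↑F : Set G) → f' (x * y) = f' x * f' y := by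
      intro x y hx hy
      rw [hf'eq x hx, hf'eq y hy, hf'eq (x*y) (mul_mem hx hy), ← map_mul]
      rfl
    have hf'inv : ∀ {x : G}, x ∈ Subgroup.closure (↑F : Set G) → f' x⁻¹ = (f' x)⁻¹ := by
      intro x hx
      rw [hf'eq x hx, hf'eq x⁻¹ (inv_mem hx), ← map_inv]
      rfl
    have hex : ∃ g ∈ F, f' g ≠ 1 := by
      by_contra hcon
      push_neg at hcon
      have hall : ∀ x : Subgroup.closure (↑F : Set G), f x = 1 := by
        rintro ⟨x, hx⟩
        induction hx using Subgroup.closure_induction with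
        | mem g hg =>
          have := hcon g hg
          rwa [hf'eq g (Subgroup.subset_closure hg)] at this
        | one => exact map_one f
        | mul x y hx hy ihx ihy =>
          have : (⟨x * y, mul_mem hx hy⟩ : Subgroup.closure (↑F : Set G))
              = ⟨x, hx⟩ * ⟨y, hy⟩ := rfl
          rw [this, map_mul, ihx, ihy, mul_one]
        | inv x hx ihx =>
          have : (⟨x⁻¹, inv_mem hx⟩ : Subgroup.closure (↑F : Set G)) = (⟨x, hx⟩)⁻¹ := rfl
          rw [this, map_inv, ihx, inv_one]
      obtain ⟨k, hk⟩ := exists_ne (1 : K)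
      obtain ⟨x, rfl⟩ := hf k
      exact hk (hall x)
    obtain ⟨gw, hgwF, hgw⟩ := hex
    set F₀ := F.filter (fun g => f' g = 1) with hF₀def
    have hF₀sub : F₀ ⊆ F := Finset.filter_subset _ _
    have hF₀card : F₀.card ≤ n := by
      have hlt : F₀.card < F.card := Finset.card_lt_card
        ⟨hF₀sub, fun hsub => hgw (Finset.mem_filter.1 (hsub hgwF)).2⟩
      omega
    obtain ⟨ε₀, hε₀⟩ := ih F₀ hF₀card (fun h1 => hF1 (hF₀sub h1))
    set ε : G → Bool := fun g =>
      if f' g = 1 then ε₀ g else (if loK.le (f' g) 1 then false else true) with hεdef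
    have hval : ∀ g ∈ F, loK.le 1 (f' (sg ε g)) ∧ (f' g ≠ 1 → f' (sg ε g) ≠ 1) := by
      intro g hgF
      have hgH : g ∈ Subgroup.closure (↑F : Set G) := Subgroup.subset_closure hgF
      by_cases hfg : f' g = 1
      · have : f' (sg ε g) = 1 := by
          cases hb : ε g with
          | true => simp only [sg, hb, Bool.cond_true]; exact hfg
          | false => simp only [sg, hb, Bool.cond_false]; rw [hf'inv hgH, hfg, inv_one]
        rw [this]
        exact ⟨loK.le_refl 1, fun h => absurd hfg h⟩
      · by_cases hle : loK.le (f' g) 1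
        · have hεg : ε g = false := by rw [hεdef]; simp [hfg, hle]
          have hsg : sg ε g = g⁻¹ := by simp only [sg, hεg, Bool.cond_false]
          rw [hsg, hf'inv hgH]
          constructor
          · have := invK (f' g) 1 (f' g)⁻¹ hle
            rwa [mul_inv_cancel, one_mul] at this
          · intro _
            simpa using hfg
        · have hεg : ε g = true := by rw [hεdef]; simp [hfg, hle]
          have hsg : sg ε g = g := by simp only [sg, hεg, Bool.cond_true]
          rw [hsg]
          have : loK.le 1 (f' g) := (loK.le_total (f' g) 1).resolve_left hle
          exact ⟨this, fun h => h⟩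
    refine ⟨ε, ?_⟩
    intro hmem
    obtain ⟨l, hlne, hlS, hlprod⟩ := exists_list_of_mem_sclosure hmem
    by_cases hc : ∀ y ∈ l, ∃ g ∈ F₀, y = sg ε g
    · apply hε₀
      rw [← hlprod]
      apply list_prod_mem_sclosure hlne
      intro y hy
      obtain ⟨g, hgF₀, rfl⟩ := hc y hy
      have hfg : f' g = 1 := (Finset.mem_filter.1 hgF₀).2
      have hag : sg ε g = sg ε₀ g := sg_eq_of_agree (by rw [hεdef]; simp [hfg])
      rw [hag]
      exact ⟨g, Finset.mem_coe.2 hgF₀, rfl⟩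
    · push_neg at hc
      obtain ⟨y₀, hy₀l, hy₀⟩ := hc
      have hlH : ∀ y ∈ l, y ∈ Subgroup.closure (↑F : Set G) := by
        intro y hy
        obtain ⟨g, hgF, rfl⟩ := hlS y hy
        have hgH : g ∈ Subgroup.closure (↑F : Set G) := Subgroup.subset_closure hgF
        cases hb : ε g with
        | true => simp only [sg, hb, Bool.cond_true]; exact hgH
        | false => simp only [sg, hb, Bool.cond_false]; exact inv_mem hgH
      have hmap : ∀ l' : List G, (∀ y ∈ l', y ∈ Subgroup.closure (↑F : Set G)) →
          f' l'.prod = (l'.map f').prod := by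
        intro l' hl'
        induction l' with
        | nil => simpa using hf'one
        | cons a t iht =>
          rw [List.prod_cons, List.map_cons, List.prod_cons,
            hf'mul (hl' a (by simp)) (list_prod_mem fun y hy => hl' y (by simp [hy])),
            iht fun y hy => hl' y (by simp [hy])]
      have h1' : ∀ y ∈ l.map f', loK.le 1 y := by
        intro y hy
        obtain ⟨z, hzl, rfl⟩ := List.mem_map.1 hy
        obtain ⟨g, hgF, rfl⟩ := hlS z hzl
        exact (hval g hgF).1
      have h2' : ∃ y ∈ l.map f', y ≠ 1 := by
        refine ⟨f' y₀, List.mem_map_of_mem hy₀l, ?_⟩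
        obtain ⟨g, hgF, rfl⟩ := hlS y₀ hy₀l
        have hgnF₀ : g ∉ F₀ := fun h => hy₀ g h rfl
        have hfg : f' g ≠ 1 := by
          intro h
          exact hgnF₀ (Finset.mem_filter.2 ⟨Finset.mem_coe.1 hgF, h⟩)
        exact (hval g (Finset.mem_coe.1 hgF)).2 hfg
      exact one_lt_list_prod loK invK _ h1' h2'
        (by rw [← hmap l hlH, hlprod, hf'one])

end BurnsHaleAux

theorem stmt_9 {G : Type u} [Group G] :
    RightOrderable G ↔
      ∀ H : Subgroup G, H.FG → H ≠ ⊥ →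
        ∃ (K : Type u) (_ : Group K), Nontrivial K ∧ RightOrderable K ∧
          ∃ f : H →* K, Function.Surjective f := by
  constructor
  · rintro ⟨lo, hlo⟩ H _ hne
    refine ⟨↥H, inferInstance, (Subgroup.nontrivial_iff_ne_bot H).2 hne, ?_,
      MonoidHom.id _, Function.surjective_id⟩
    letI := lo
    refine ⟨LinearOrder.lift' (fun x : H => (x : G)) Subtype.coe_injective, ?_⟩
    intro a b c hab
    exact hlo (↑a) (↑b) (↑c) hab
  · intro hyp
    apply BurnsHaleAux.rightOrderable_of_good
    intro F hF
    exact BurnsHaleAux.good_of_hyp hyp F.card F le_rfl hF
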